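/- Let G be a directed graph on n nodes. Suppose that for every node i, the node-complement graph Ĝ(i) (obtained from G by complementing all outgoing edges of i) contains both a source and a target. Then n ≤ 2 or G is the directed 3-cycle. -/
import Mathlib

open Finset

/-- A source is a node with no incoming edges (`G a b` means edge `a → b`). -/
def isSource {n : ℕ} (G : Fin n → Fin n → Prop) (s : Fin n) : Prop :=
  ∀ j, j ≠ s → ¬ G j s

/-- A target is a node receiving an edge from every other node. -/
def isTarget {n : ℕ} (G : Fin n → Fin n → Prop) (t : Fin n) : Prop :=
  ∀ j, j ≠ t → G j t

/-- The node-complement `Ĝ(i)`: complement all outgoing edges of `i`,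
leaving the rest of the graph intact (no self-loops are introduced). -/
def hatG {n : ℕ} (G : Fin n → Fin n → Prop) (i : Fin n) : Fin n → Fin n → Prop :=
  fun a b => if a = i then (b ≠ i ∧ ¬ G i b) else G a b

theorem stmt_6 {n : ℕ} (G : Fin n → Fin n → Prop)
    (hirr : ∀ i, ¬ G i i)
    (h : ∀ i : Fin n, (∃ s, isSource (hatG G i) s) ∧ (∃ t, isTarget (hatG G i) t)) :
    n ≤ 2 ∨ ∃ e : Fin n ≃ Fin 3, ∀ a b, G a b ↔ e b = e a + 1 := by
  classical
  by_cases hn : n ≤ 2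
  · exact Or.inl hn
  right
  push_neg at hn
  have hQ : ∀ i, ∃ s, (∀ j, j ≠ i → ¬ G j s) ∧ (i ≠ s → G i s) := by
    intro i
    obtain ⟨s, hs⟩ := (h i).1
    by_cases hsi : s = i
    · subst hsi
      refine ⟨s, fun j hj => ?_, fun hc => absurd rfl hc⟩
      have := hs j hj
      simpa [hatG, hj] using this
    · refine ⟨s, fun j hj => ?_, fun _ => ?_⟩
      · by_cases hjs : j = s
        · subst hjs; exact hirr j
        · have := hs j hjs
          simpa [hatG, hj] using this
      · have := hs i (fun he => hsi he.symm)
        simp only [hatG, if_pos rfl] at this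
        by_contra hg
        exact this ⟨hsi, hg⟩
  -- R t i : N(t) ⊇ univ \ {t, i}, and if i ≠ t then i ∉ N(t)
  have hR : ∀ i, ∃ t, (∀ j, j ≠ i → j ≠ t → G j t) ∧ (i ≠ t → ¬ G i t) := by
    intro i
    obtain ⟨t, ht⟩ := (h i).2
    by_cases hti : t = i
    · subst hti
      refine ⟨t, fun j hj _ => ?_, fun hc => absurd rfl hc⟩
      have := ht j hj
      simpa [hatG, hj] using this
    · refine ⟨t, fun j hj hjt => ?_, fun _ => ?_⟩
      · have := ht j hjt
        simpa [hatG, hj] using this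
      · have := ht i (fun he => hti he.symm)
        simp only [hatG, if_pos rfl] at this
        exact this.2
  have hQinj : ∀ s i i', ((∀ j, j ≠ i → ¬ G j s) ∧ (i ≠ s → G i s)) →
      ((∀ j, j ≠ i' → ¬ G j s) ∧ (i' ≠ s → G i' s)) → i = i' := by
    intro s i i' ⟨h1, h2⟩ ⟨h1', h2'⟩
    by_contra hne
    by_cases hi : i = s
    · subst hi
      have hi' : i' ≠ i := fun he => hne he.symm
      exact h1 i' hi' (h2' hi')
    · by_cases hi' : i' = s
      · subst hi'
        exact h1' i hne (h2 hi)
      · exact h1' i hne (h2 hi)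
  have hRinj : ∀ t i i', ((∀ j, j ≠ i → j ≠ t → G j t) ∧ (i ≠ t → ¬ G i t)) →
      ((∀ j, j ≠ i' → j ≠ t → G j t) ∧ (i' ≠ t → ¬ G i' t)) → i = i' := by
    intro t i i' ⟨h1, h2⟩ ⟨h1', h2'⟩
    by_contra hne
    by_cases hi : i = t
    · subst hi
      have hi' : i' ≠ i := fun he => hne he.symm
      exact h2' hi' (h1 i' hi' hi')
    · by_cases hi' : i' = t
      · subst hi'
        exact h2 hi (h1' i hne hi)
      · exact h2 hi (h1' i hne hi)
  choose w hw using hQ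
  choose g hg using hR
  have hwsurj : Function.Surjective w :=
    Finite.surjective_of_injective (fun i i' he => hQinj (w i) i i' (hw i) (he ▸ hw i'))
  have hgsurj : Function.Surjective g :=
    Finite.surjective_of_injective (fun i i' he => hRinj (g i) i i' (hg i) (he ▸ hg i'))
  -- hQall : every node s has N(s) ⊆ {i} for some i
  have hQall : ∀ s, ∃ i, (∀ j, j ≠ i → ¬ G j s) ∧ (i ≠ s → G i s) := by
    intro s; obtain ⟨i, hi⟩ := hwsurj s; exact ⟨i, hi ▸ hw i⟩
  have hRall : ∀ t, ∃ i, (∀ j, j ≠ i → j ≠ t → G j t) ∧ (i ≠ t → ¬ G i t) := by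
    intro t; obtain ⟨i, hi⟩ := hgsurj t; exact ⟨i, hi ▸ hg i⟩
  -- n = 3
  have hpos : 0 < n := by omega
  have h3 : n = 3 := by
    set v : Fin n := ⟨0, hpos⟩ with hv
    obtain ⟨i0, hQA, _⟩ := hQall v
    obtain ⟨k0, hRA, _⟩ := hRall v
    have hsub : (Finset.univ : Finset (Fin n)) ⊆ {v, k0, i0} := by
      intro x _
      simp only [Finset.mem_insert, Finset.mem_singleton]
      by_cases h1 : x = v; · exact Or.inl h1
      by_cases h2 : x = k0; · exact Or.inr (Or.inl h2)
      refine Or.inr (Or.inr ?_)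
      by_contra h3
      exact hQA x h3 (hRA x h2 h1)
    have hc1 := Finset.card_le_card hsub
    have hc2 : ({v, k0, i0} : Finset (Fin n)).card ≤ 3 := by
      refine (Finset.card_insert_le _ _).trans ?_
      have := Finset.card_insert_le k0 ({i0} : Finset (Fin n))
      simp only [Finset.card_singleton] at this
      omega
    rw [Finset.card_univ, Fintype.card_fin] at hc1
    omega
  subst h3
  -- every node has a unique in-neighbor f v ≠ v
  have hthird : ∀ a b : Fin 3, ∃ c, c ≠ a ∧ c ≠ b := by decide
  have hf : ∀ v : Fin 3, ∃ i, i ≠ v ∧ ∀ j, G j v ↔ j = i := by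
    intro v
    obtain ⟨i, hQ1, hQ2⟩ := hQall v
    obtain ⟨k, hR1, _⟩ := hRall v
    have hiv : i ≠ v := by
      intro he
      subst he
      obtain ⟨x, hx1, hx2⟩ := hthird i k
      exact hQ1 x hx1 (hR1 x hx2 hx1)
    refine ⟨i, hiv, fun j => ⟨fun hgj => ?_, fun he => he ▸ hQ2 hiv⟩⟩
    by_contra hne
    exact hQ1 j hne hgj
  choose f hfne hfspec using hf
  have hfinj : Function.Injective f := by
    intro a b he
    by_contra hab
    have hca : f a ≠ a := hfne a
    have hcb : f a ≠ b := he ▸ hfne b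
    obtain ⟨hR1, hR2⟩ := hg (f a)
    have hmem : ∀ a b c : Fin 3, a ≠ b → c ≠ a → c ≠ b → ∀ x, x = a ∨ x = b ∨ x = c := by
      decide
    rcases hmem a b (f a) hab hca hcb (g (f a)) with ht | ht | ht
    · rw [ht] at hR2
      exact hR2 hca ((hfspec a (f a)).mpr rfl)
    · rw [ht] at hR2
      exact hR2 hcb ((hfspec b (f a)).mpr he)
    · rw [ht] at hR1
      have ha : a = f (f a) := (hfspec (f a) a).mp (hR1 a (Ne.symm hca) (Ne.symm hca))
      have hb : b = f (f a) := (hfspec (f a) b).mp (hR1 b (Ne.symm hcb) (Ne.symm hcb))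
      exact hab (ha.trans hb.symm)
  have hall : ∀ x : Fin 3, x = 0 ∨ x = 1 ∨ x = 2 := by decide
  have hcases : (f 0 = 1 ∧ f 1 = 2 ∧ f 2 = 0) ∨ (f 0 = 2 ∧ f 1 = 0 ∧ f 2 = 1) := by
    have key : ∀ x y z : Fin 3, x ≠ 0 → y ≠ 1 → z ≠ 2 → x ≠ y → x ≠ z → y ≠ z →
        ((x = 1 ∧ y = 2 ∧ z = 0) ∨ (x = 2 ∧ y = 0 ∧ z = 1)) := by decide
    exact key _ _ _ (hfne 0) (hfne 1) (hfne 2)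
      (fun hh => absurd (hfinj hh) (by decide))
      (fun hh => absurd (hfinj hh) (by decide))
      (fun hh => absurd (hfinj hh) (by decide))
  rcases hcases with ⟨h0, h1, h2⟩ | ⟨h0, h1, h2⟩
  · -- f b = b + 1 : G a b ↔ a = b + 1
    have hfb : ∀ b : Fin 3, f b = b + 1 := by
      intro b
      rcases hall b with rfl | rfl | rfl
      · rw [h0]; decide
      · rw [h1]; decide
      · rw [h2]; decide
    refine ⟨Equiv.neg (Fin 3), fun a b => ?_⟩
    rw [hfspec b a, hfb b]
    simp only [Equiv.neg_apply]
    revert a b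
    decide
  · have hfb : ∀ b : Fin 3, f b = b + 2 := by
      intro b
      rcases hall b with rfl | rfl | rfl
      · rw [h0]; decide
      · rw [h1]; decide
      · rw [h2]; decide
    refine ⟨Equiv.refl (Fin 3), fun a b => ?_⟩
    rw [hfspec b a, hfb b]
    simp only [Equiv.refl_apply]
    revert a b
    decide
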